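/- arXiv:1807.02708 — 3 statements merged into one kernel-verified Lean document; each statement's English description precedes it below -/
import Mathlib

section
/- Let H be a real inner product space and let p̂₀, q̂₋, q̂₀, q̂₊ ∈ H be such that q̂₀ lies strictly between q̂₋ and q̂₊ (i.e., q̂₀ is in the open segment from q̂₋ to q̂₊, with q̂₀ ≠ q̂₋ and q̂₀ ≠ q̂₊). Let p̃₀, q̃₋, q̃₀, q̃₊ be points of the Euclidean plane ℝ² with q̃₀ strictly between q̃₋ and q̃₊. Assume ‖p̂₀ − q̂₀‖ = ‖p̃₀ − q̃₀‖ ≠ 0, ‖q̂₀ − q̂₋‖ = ‖q̃₀ − q̃₋‖, ‖q̂₀ − q̂₊‖ = ‖q̃₀ − q̃₊‖, ‖p̂₀ − q̂₋‖ ≥ ‖p̃₀ − q̃₋‖ and ‖p̂₀ − q̂₊‖ ≥ ‖p̃₀ − q̃₊‖. Then ∠(p̂₀, q̂₀, q̂₊) = ∠(p̃₀, q̃₀, q̃₊), ∠(p̂₀, q̂₀, q̂₋) = ∠(p̃₀, q̃₀, q̃₋), and moreover ‖p̂₀ − q̂₋‖ = ‖p̃₀ − q̃₋‖ and ‖p̂₀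 − q̂₊‖ = ‖p̃₀ − q̃₊‖. -/
open EuclideanGeometry Real

/-- If `Q0` lies strictly between `Qminus` and `Qplus` in a real inner product space `H`,
the model points `q0`, `qminus`, `qplus` in the Euclidean plane are positioned likewise,
the distances from `P0` (resp. `p0`) to `Q0` (resp. `q0`) agree and are nonzero,
the distances `Q0Qminus`, `Q0Qplus` agree with the model ones, and the distances `P0Qminus`,
`P0Qplus` are at least the model ones, then both adjacent angles at `Q0` equal the
model angles and the distances `P0Qminus`, `P0Qplus` equal the model ones. -/
theorem angles_eq_of_sbtw
    {H : Type*} [NormedAddCommGroup H] [InnerProductSpace ℝ H]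
    (P0 Qminus Q0 Qplus : H) (p0 qminus q0 qplus : EuclideanSpace ℝ (Fin 2))
    (hbtw : Sbtw ℝ Qminus Q0 Qplus) (hbtw' : Sbtw ℝ qminus q0 qplus)
    (h0 : ‖P0 - Q0‖ = ‖p0 - q0‖) (h0ne : ‖P0 - Q0‖ ≠ 0)
    (hminus : ‖Q0 - Qminus‖ = ‖q0 - qminus‖)
    (hplus : ‖Q0 - Qplus‖ = ‖q0 - qplus‖)
    (hgeminus : ‖p0 - qminus‖ ≤ ‖P0 - Qminus‖)
    (hgeplus : ‖p0 - qplus‖ ≤ ‖P0 - Qplus‖) :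
    EuclideanGeometry.angle P0 Q0 Qplus = EuclideanGeometry.angle p0 q0 qplus ∧
    EuclideanGeometry.angle P0 Q0 Qminus = EuclideanGeometry.angle p0 q0 qminus ∧
    ‖P0 - Qminus‖ = ‖p0 - qminus‖ ∧ ‖P0 - Qplus‖ = ‖p0 - qplus‖ := by
  have hd0 : dist P0 Q0 = dist p0 q0 := by simpa [dist_eq_norm] using h0
  have hd0pos : 0 < dist P0 Q0 := by
    rw [dist_eq_norm]; exact (norm_nonneg _).lt_of_ne' h0ne
  have hdm : dist Q0 Qminus = dist q0 qminus := by simpa [dist_eq_norm] using hminus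
  have hdp : dist Q0 Qplus = dist q0 qplus := by simpa [dist_eq_norm] using hplus
  have hdmpos : 0 < dist Q0 Qminus := dist_pos.2 hbtw.ne_left
  have hdppos : 0 < dist Q0 Qplus := dist_pos.2 hbtw.ne_right
  have hgem : dist p0 qminus ≤ dist P0 Qminus := by simpa [dist_eq_norm] using hgeminus
  have hgep : dist p0 qplus ≤ dist P0 Qplus := by simpa [dist_eq_norm] using hgeplus
  have lawPp := EuclideanGeometry.law_cos P0 Q0 Qplus
  have lawpp := EuclideanGeometry.law_cos p0 q0 qplus
  have lawPm := EuclideanGeometry.law_cos P0 Q0 Qminus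
  have lawpm := EuclideanGeometry.law_cos p0 q0 qminus
  rw [dist_comm Qplus Q0] at lawPp
  rw [dist_comm qplus q0] at lawpp
  rw [dist_comm Qminus Q0] at lawPm
  rw [dist_comm qminus q0] at lawpm
  -- adjacent angles sum to π
  have hsum : ∠ P0 Q0 Qminus + ∠ P0 Q0 Qplus = π :=
    EuclideanGeometry.angle_add_angle_eq_pi_of_angle_eq_pi P0 hbtw.angle₁₂₃_eq_pi
  have hsum' : ∠ p0 q0 qminus + ∠ p0 q0 qplus = π :=
    EuclideanGeometry.angle_add_angle_eq_pi_of_angle_eq_pi p0 hbtw'.angle₁₂₃_eq_pi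
  have hcosP : Real.cos (∠ P0 Q0 Qminus) = - Real.cos (∠ P0 Q0 Qplus) := by
    have : ∠ P0 Q0 Qminus = π - ∠ P0 Q0 Qplus := by linarith
    rw [this, Real.cos_pi_sub]
  have hcosp : Real.cos (∠ p0 q0 qminus) = - Real.cos (∠ p0 q0 qplus) := by
    have : ∠ p0 q0 qminus = π - ∠ p0 q0 qplus := by linarith
    rw [this, Real.cos_pi_sub]
  -- cos comparisons
  have hsqp : dist p0 qplus * dist p0 qplus ≤ dist P0 Qplus * dist P0 Qplus :=
    mul_self_le_mul_self dist_nonneg hgep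
  have hsqm : dist p0 qminus * dist p0 qminus ≤ dist P0 Qminus * dist P0 Qminus :=
    mul_self_le_mul_self dist_nonneg hgem
  rw [lawPp, lawpp, hd0, hdp] at hsqp
  rw [lawPm, lawpm, hd0, hdm, hcosP, hcosp] at hsqm
  have h2p : 0 < 2 * dist p0 q0 * dist q0 qplus := by
    rw [← hd0, ← hdp]; positivity
  have h2m : 0 < 2 * dist p0 q0 * dist q0 qminus := by
    rw [← hd0, ← hdm]; positivity
  have hcle : Real.cos (∠ P0 Q0 Qplus) ≤ Real.cos (∠ p0 q0 qplus) := by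
    have h : 2 * dist p0 q0 * dist q0 qplus * Real.cos (∠ P0 Q0 Qplus) ≤
        2 * dist p0 q0 * dist q0 qplus * Real.cos (∠ p0 q0 qplus) := by linarith
    exact (mul_le_mul_iff_right₀ h2p).1 h
  have hcge : Real.cos (∠ p0 q0 qplus) ≤ Real.cos (∠ P0 Q0 Qplus) := by
    have h : 2 * dist p0 q0 * dist q0 qminus * (- Real.cos (∠ P0 Q0 Qplus)) ≤
        2 * dist p0 q0 * dist q0 qminus * (- Real.cos (∠ p0 q0 qplus)) := by linarith
    have := (mul_le_mul_iff_right₀ h2m).1 h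
    linarith
  have hcos : Real.cos (∠ P0 Q0 Qplus) = Real.cos (∠ p0 q0 qplus) :=
    le_antisymm hcle hcge
  have hangp : ∠ P0 Q0 Qplus = ∠ p0 q0 qplus :=
    Real.injOn_cos ⟨EuclideanGeometry.angle_nonneg _ _ _, EuclideanGeometry.angle_le_pi _ _ _⟩
      ⟨EuclideanGeometry.angle_nonneg _ _ _, EuclideanGeometry.angle_le_pi _ _ _⟩ hcos
  have hangm : ∠ P0 Q0 Qminus = ∠ p0 q0 qminus := by linarith
  have hdistp : dist P0 Qplus = dist p0 qplus := by
    have hsq : dist P0 Qplus * dist P0 Qplus = dist p0 qplus * dist p0 qplus := by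
      rw [lawPp, lawpp, hd0, hdp, hangp]
    exact (mul_self_inj dist_nonneg dist_nonneg).1 hsq
  have hdistm : dist P0 Qminus = dist p0 qminus := by
    have hsq : dist P0 Qminus * dist P0 Qminus = dist p0 qminus * dist p0 qminus := by
      rw [lawPm, lawpm, hd0, hdm, hangm]
    exact (mul_self_inj dist_nonneg dist_nonneg).1 hsq
  refine ⟨hangp, hangm, ?_, ?_⟩
  · simpa [dist_eq_norm] using hdistm
  · simpa [dist_eq_norm] using hdistp
end

section
/- Let H be a real inner product space and let p̂₋, p̂₀, q̂₀, q̂₊ ∈ H. Let p̃₋, p̃₀, q̃₀, q̃₊ be points of the Euclidean plane ℝ² with p̃₀ ≠ q̃₀, such that p̃₋ and q̃₊ lie strictly on opposite sides of the line through p̃₀ and q̃₀ (i.e., there is an affine functional f on ℝ² vanishing on that line with f(p̃₋) < 0 < f(q̃₊)). Assume ‖p̂₋ − p̂₀‖ = ‖p̃₋ − p̃₀‖ ≠ 0, ‖p̂₀ − q̂₀‖ = ‖p̃₀ − q̃₀‖, ‖q̂₀ − q̂₊‖ = ‖q̃₀ − q̃₊‖ ≠ 0, ∠(p̂₋, p̂₀,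 q̂₀) = ∠(p̃₋, p̃₀, q̃₀), ∠(p̂₀, q̂₀, q̂₊) = ∠(p̃₀, q̃₀, q̃₊), and additionally ‖p̂₋ − q̂₊‖ = ‖p̃₋ − q̃₊‖. Then all six pairwise distances agree with the model: ‖p̂₋ − q̂₀‖ = ‖p̃₋ − q̃₀‖ and ‖p̂₀ − q̂₊‖ = ‖p̃₀ − q̃₊‖; moreover the four points p̂₋, p̂₀, q̂₀, q̂₊ lie in a common two-dimensional affine subspace of H, with p̂₋ and q̂₊ on opposite sides of the line through p̂₀ and q̂₀. -/
open EuclideanGeometry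

private lemma inner_eq_of_angle_eq' {E F : Type*} [NormedAddCommGroup E] [InnerProductSpace ℝ E]
    [NormedAddCommGroup F] [InnerProductSpace ℝ F]
    {x y : E} {x' y' : F} (hx : ‖x‖ = ‖x'‖) (hy : ‖y‖ = ‖y'‖)
    (ha : InnerProductGeometry.angle x y = InnerProductGeometry.angle x' y') :
    (inner ℝ x y : ℝ) = inner ℝ x' y' := by
  rw [← InnerProductGeometry.cos_angle_mul_norm_mul_norm,
    ← InnerProductGeometry.cos_angle_mul_norm_mul_norm, hx, hy, ha]

private lemma expand3 {E : Type*} [NormedAddCommGroup E] [InnerProductSpace ℝ E] (x y z : E) :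
    (inner ℝ (x - y - z) (x - y - z) : ℝ)
      = inner ℝ x x - 2 * inner ℝ x y - 2 * inner ℝ x z + 2 * inner ℝ y z + inner ℝ y y + inner ℝ z z := by
  simp only [inner_sub_left, inner_sub_right, real_inner_comm y x, real_inner_comm z x,
    real_inner_comm z y]
  ring

private lemma expand2 {E : Type*} [NormedAddCommGroup E] [InnerProductSpace ℝ E] (x y : E) :
    (inner ℝ (x - y) (x - y) : ℝ) = inner ℝ x x - 2 * inner ℝ x y + inner ℝ y y := by
  simp only [inner_sub_left, inner_sub_right, real_inner_comm y x]
  ring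

private lemma expand2' {E : Type*} [NormedAddCommGroup E] [InnerProductSpace ℝ E] (x y : E) :
    (inner ℝ (x + y) (x + y) : ℝ) = inner ℝ x x + 2 * inner ℝ x y + inner ℝ y y := by
  simp only [inner_add_left, inner_add_right, real_inner_comm y x]
  ring

private lemma expandW {E : Type*} [NormedAddCommGroup E] [InnerProductSpace ℝ E]
    (x y z : E) (a b : ℝ) :
    (inner ℝ (z - (a • x + b • y)) (z - (a • x + b • y)) : ℝ)
      = inner ℝ z z - 2 * a * inner ℝ x z - 2 * b * inner ℝ y z + a * a * inner ℝ x x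
        + 2 * (a * b) * inner ℝ x y + b * b * inner ℝ y y := by
  simp only [inner_sub_left, inner_sub_right, inner_add_left, inner_add_right,
    real_inner_smul_left, real_inner_smul_right, real_inner_comm z x, real_inner_comm z y,
    real_inner_comm y x]
  ring

private lemma norm_eq_of_sq_eq' {a b : ℝ} (hb : 0 ≤ b) (h : a * a = b * b) (ha : 0 ≤ a) :
    a = b := by nlinarith

private lemma gram_pos {E : Type*} [NormedAddCommGroup E] [InnerProductSpace ℝ E] {x y : E}
    (hind : LinearIndependent ℝ ![x, y]) :
    (inner ℝ x y : ℝ) * inner ℝ x y < inner ℝ x x * inner ℝ y y := by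
  have hy : y ≠ 0 := by simpa using hind.ne_zero 1
  rcases lt_or_eq_of_le (real_inner_mul_inner_self_le x y) with h | h
  · exact h
  · exfalso
    have hz : (inner ℝ y y : ℝ) • x + (-(inner ℝ x y : ℝ)) • y = 0 := by
      have hzz : (inner ℝ ((inner ℝ y y : ℝ) • x - (inner ℝ x y : ℝ) • y)
          ((inner ℝ y y : ℝ) • x - (inner ℝ x y : ℝ) • y) : ℝ) = 0 := by
        simp only [inner_sub_left, inner_sub_right, real_inner_smul_left,
          real_inner_smul_right]
        linear_combination (-(inner ℝ y y : ℝ)) * h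
          + (inner ℝ y y : ℝ) * (inner ℝ x y : ℝ) * (real_inner_comm y x)
      have := inner_self_eq_zero.mp hzz
      rw [sub_eq_add_neg, ← neg_smul] at this
      exact this
    have hB := (LinearIndependent.pair_iff.mp hind _ _ hz).1
    exact hy (inner_self_eq_zero.mp hB)

private lemma gram_indep {E : Type*} [NormedAddCommGroup E] [InnerProductSpace ℝ E] {x y : E}
    (h : (inner ℝ x y : ℝ) * inner ℝ x y < inner ℝ x x * inner ℝ y y) :
    LinearIndependent ℝ ![x, y] := by
  rw [LinearIndependent.pair_iff]
  intro s t hst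
  have e1 : s * inner ℝ x x + t * (inner ℝ x y : ℝ) = 0 := by
    have := congrArg (fun z : E => (inner ℝ z x : ℝ)) hst
    simpa [inner_add_left, real_inner_smul_left, real_inner_comm y x] using this
  have e2 : s * inner ℝ x y + t * (inner ℝ y y : ℝ) = 0 := by
    have := congrArg (fun z : E => (inner ℝ z y : ℝ)) hst
    simpa [inner_add_left, real_inner_smul_left] using this
  constructor
  · have hs : s * ((inner ℝ x x : ℝ) * inner ℝ y y - inner ℝ x y * inner ℝ x y) = 0 := by
      linear_combination (inner ℝ y y : ℝ) * e1 - (inner ℝ x y : ℝ) * e2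
    rcases mul_eq_zero.mp hs with h' | h'
    · exact h'
    · nlinarith
  · have ht : t * ((inner ℝ x x : ℝ) * inner ℝ y y - inner ℝ x y * inner ℝ x y) = 0 := by
      linear_combination (inner ℝ x x : ℝ) * e2 - (inner ℝ x y : ℝ) * e1
    rcases mul_eq_zero.mp ht with h' | h'
    · exact h'
    · nlinarith

private def innerLeft {E : Type*} [NormedAddCommGroup E] [InnerProductSpace ℝ E] (n : E) :
    E →ₗ[ℝ] ℝ where
  toFun x := inner ℝ n x
  map_add' x y := inner_add_right n x y
  map_smul' c x := by simp [real_inner_smul_right]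

private lemma sep_functional {E : Type*} [NormedAddCommGroup E] [InnerProductSpace ℝ E]
    (P0 u v : E) (a b : ℝ)
    (hD : (inner ℝ u v : ℝ) * inner ℝ u v < inner ℝ u u * inner ℝ v v) (ha : a < 0) :
    ∃ g : E →ᵃ[ℝ] ℝ, g P0 = 0 ∧ g (P0 + v) = 0 ∧ g (P0 + u) < 0 ∧
      0 < g (P0 + (a • u + (b + 1) • v)) := by
  set n : E := (inner ℝ u v : ℝ) • v - (inner ℝ v v : ℝ) • u with hn
  refine ⟨AffineMap.mk' (fun x => (inner ℝ n (x - P0) : ℝ)) (innerLeft n) P0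
    (fun p => by simp [innerLeft, vsub_eq_sub]), ?_, ?_, ?_, ?_⟩
  · simp
  · rw [AffineMap.coe_mk', add_sub_cancel_left, hn]
    simp only [inner_sub_left, real_inner_smul_left]
    ring
  · rw [AffineMap.coe_mk', add_sub_cancel_left, hn]
    simp only [inner_sub_left, real_inner_smul_left]
    rw [real_inner_comm u v]
    nlinarith [hD]
  · rw [AffineMap.coe_mk', add_sub_cancel_left, hn]
    simp only [inner_sub_left, inner_add_right, real_inner_smul_left, real_inner_smul_right]
    rw [real_inner_comm u v]
    nlinarith [mul_pos (neg_pos.mpr ha) (sub_pos.mpr hD)]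

/-- Rigidity in the equality case: if the broken line `Pminus P0 Q0 Qplus` in a real inner
product space `H` has the same side lengths and the same angles at `P0` and `Q0` as a
model broken line `pminus p0 q0 qplus` in the Euclidean plane whose endpoints lie strictly on
opposite sides of the line through `p0` and `q0`, and moreover `‖Pminus - Qplus‖ = ‖pminus - qplus‖`,
then all six pairwise distances agree with the model, the four points of `H` lie in a
common two-dimensional affine subspace, and `Pminus`, `Qplus` lie on opposite sides of the
line through `P0` and `Q0`. -/
theorem rigidity_of_dist_eq
    {H : Type*} [NormedAddCommGroup H] [InnerProductSpace ℝ H]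
    (Pminus P0 Q0 Qplus : H) (pminus p0 q0 qplus : EuclideanSpace ℝ (Fin 2))
    (hne : p0 ≠ q0)
    (hside : ∃ f : EuclideanSpace ℝ (Fin 2) →ᵃ[ℝ] ℝ,
      f p0 = 0 ∧ f q0 = 0 ∧ f pminus < 0 ∧ 0 < f qplus)
    (h1 : ‖Pminus - P0‖ = ‖pminus - p0‖) (h1ne : ‖Pminus - P0‖ ≠ 0)
    (h2 : ‖P0 - Q0‖ = ‖p0 - q0‖)
    (h3 : ‖Q0 - Qplus‖ = ‖q0 - qplus‖) (h3ne : ‖Q0 - Qplus‖ ≠ 0)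
    (ha1 : EuclideanGeometry.angle Pminus P0 Q0 = EuclideanGeometry.angle pminus p0 q0)
    (ha2 : EuclideanGeometry.angle P0 Q0 Qplus = EuclideanGeometry.angle p0 q0 qplus)
    (hdiag : ‖Pminus - Qplus‖ = ‖pminus - qplus‖) :
    ‖Pminus - Q0‖ = ‖pminus - q0‖ ∧ ‖P0 - Qplus‖ = ‖p0 - qplus‖ ∧
    (∃ s : AffineSubspace ℝ H, Module.finrank ℝ s.direction = 2 ∧
      Pminus ∈ s ∧ P0 ∈ s ∧ Q0 ∈ s ∧ Qplus ∈ s) ∧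
    (∃ g : H →ᵃ[ℝ] ℝ, g P0 = 0 ∧ g Q0 = 0 ∧ g Pminus < 0 ∧ 0 < g Qplus) := by
  obtain ⟨f, hfp0, hfq0, hfm, hfp⟩ := hside
  set u : H := Pminus - P0 with hu
  set v : H := Q0 - P0 with hv
  set w : H := Qplus - Q0 with hw
  set u' : EuclideanSpace ℝ (Fin 2) := pminus - p0 with hu'
  set v' : EuclideanSpace ℝ (Fin 2) := q0 - p0 with hv'
  set w' : EuclideanSpace ℝ (Fin 2) := qplus - q0 with hw'
  have hnv : ‖v‖ = ‖v'‖ := by rw [hv, hv', norm_sub_rev Q0 P0, norm_sub_rev q0 p0]; exact h2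
  have hnw : ‖w‖ = ‖w'‖ := by rw [hw, hw', norm_sub_rev Qplus Q0, norm_sub_rev qplus q0]; exact h3
  -- inner ℝ products of the sides agree
  have huv : (inner ℝ u v : ℝ) = inner ℝ u' v' := inner_eq_of_angle_eq' h1 hnv ha1
  have hvw : (inner ℝ v w : ℝ) = inner ℝ v' w' := by
    have h := inner_eq_of_angle_eq' (x := P0 - Q0) (y := w) (x' := p0 - q0) (y' := w') h2 hnw ha2
    have e1 : P0 - Q0 = -v := by rw [hv]; abel
    have e2 : p0 - q0 = -v' := by rw [hv']; abel
    rw [e1, e2, inner_neg_left, inner_neg_left, neg_inj] at h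
    exact h
  have hAA : (inner ℝ u u : ℝ) = inner ℝ u' u' := by
    rw [real_inner_self_eq_norm_mul_norm, real_inner_self_eq_norm_mul_norm, h1]
  have hBB : (inner ℝ v v : ℝ) = inner ℝ v' v' := by
    rw [real_inner_self_eq_norm_mul_norm, real_inner_self_eq_norm_mul_norm, hnv]
  have hCC : (inner ℝ w w : ℝ) = inner ℝ w' w' := by
    rw [real_inner_self_eq_norm_mul_norm, real_inner_self_eq_norm_mul_norm, hnw]
  -- diagonal gives the remaining inner ℝ product
  have huw : (inner ℝ u w : ℝ) = inner ℝ u' w' := by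
    have e1 : Pminus - Qplus = u - v - w := by rw [hu, hv, hw]; abel
    have e2 : pminus - qplus = u' - v' - w' := by rw [hu', hv', hw']; abel
    have h := hdiag
    rw [e1, e2] at h
    have h' : (inner ℝ (u - v - w) (u - v - w) : ℝ)
        = inner ℝ (u' - v' - w') (u' - v' - w') := by
      rw [real_inner_self_eq_norm_mul_norm, real_inner_self_eq_norm_mul_norm, h]
    rw [expand3 u v w] at h'
    rw [expand3 u' v' w'] at h'
    linarith [huv, hvw, hAA, hBB, hCC]
  -- first two distance conclusions
  have c1 : ‖Pminus - Q0‖ = ‖pminus - q0‖ := by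
    have e1 : Pminus - Q0 = u - v := by rw [hu, hv]; abel
    have e2 : pminus - q0 = u' - v' := by rw [hu', hv']; abel
    rw [e1, e2]
    refine norm_eq_of_sq_eq' (norm_nonneg _) ?_ (norm_nonneg _)
    rw [← real_inner_self_eq_norm_mul_norm, ← real_inner_self_eq_norm_mul_norm,
      expand2 u v, expand2 u' v']
    linarith [huv, hAA, hBB]
  have c2 : ‖P0 - Qplus‖ = ‖p0 - qplus‖ := by
    have e1 : P0 - Qplus = -(v + w) := by rw [hv, hw]; abel
    have e2 : p0 - qplus = -(v' + w') := by rw [hv', hw']; abel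
    rw [e1, e2, norm_neg, norm_neg]
    refine norm_eq_of_sq_eq' (norm_nonneg _) ?_ (norm_nonneg _)
    rw [← real_inner_self_eq_norm_mul_norm, ← real_inner_self_eq_norm_mul_norm,
      expand2' v w, expand2' v' w']
    linarith [hvw, hBB, hCC]
  -- the model side: linear functional values
  have hlv : f.linear v' = 0 := by
    have := f.linearMap_vsub q0 p0
    rw [vsub_eq_sub, vsub_eq_sub] at this
    rw [hv', this, hfq0, hfp0, sub_zero]
  have hlu : f.linear u' = f pminus := by
    have := f.linearMap_vsub pminus p0
    rw [vsub_eq_sub, vsub_eq_sub] at this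
    rw [hu', this, hfp0, sub_zero]
  have hlw : f.linear w' = f qplus := by
    have := f.linearMap_vsub qplus q0
    rw [vsub_eq_sub, vsub_eq_sub] at this
    rw [hw', this, hfq0, sub_zero]
  have hv'ne : v' ≠ 0 := sub_ne_zero.mpr (Ne.symm hne)
  -- independence of u', v'
  have hind : LinearIndependent ℝ ![u', v'] := by
    rw [LinearIndependent.pair_iff]
    intro s t hst
    have h0 : s * f.linear u' + t * f.linear v' = 0 := by
      have := congrArg f.linear hst
      simpa [map_add, map_smul, smul_eq_mul] using this
    rw [hlv, mul_zero, add_zero] at h0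
    have hs : s = 0 := by
      rcases mul_eq_zero.mp h0 with h | h
      · exact h
      · rw [hlu] at h; exact absurd h (ne_of_lt hfm)
    refine ⟨hs, ?_⟩
    rw [hs, zero_smul, zero_add] at hst
    exact (smul_eq_zero.mp hst).resolve_right hv'ne
  -- span of u', v' is everything
  have hspan : Submodule.span ℝ (Set.range ![u', v']) = ⊤ := by
    apply Submodule.eq_top_of_finrank_eq
    rw [finrank_span_eq_card hind, Fintype.card_fin, finrank_euclideanSpace_fin]
  have hrange : Set.range ![u', v'] = {u', v'} := by
    simp [Matrix.range_cons, Matrix.range_empty, Set.pair_comm]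
  obtain ⟨a, b, hab⟩ : ∃ a b : ℝ, a • u' + b • v' = w' := by
    refine Submodule.mem_span_pair.mp ?_
    rw [← hrange, hspan]; trivial
  -- sign of a
  have hfl : f qplus = a * f pminus := by
    have := congrArg f.linear hab
    rw [map_add, map_smul, map_smul, smul_eq_mul, smul_eq_mul, hlv, hlu, hlw, mul_zero,
      add_zero] at this
    exact this.symm
  have ha_neg : a < 0 := by nlinarith
  -- Gram determinant positive, transferred to H
  have hD : (inner ℝ u v : ℝ) * inner ℝ u v < inner ℝ u u * inner ℝ v v := by
    rw [huv, hAA, hBB]; exact gram_pos hind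
  have hindH : LinearIndependent ℝ ![u, v] := gram_indep hD
  -- w lies in the span of u and v
  have hwab : w = a • u + b • v := by
    have hz : (inner ℝ (w - (a • u + b • v)) (w - (a • u + b • v)) : ℝ) = 0 := by
      rw [expandW u v w a b]
      have h0 : (inner ℝ (w' - (a • u' + b • v')) (w' - (a • u' + b • v')) : ℝ) = 0 := by
        rw [hab, sub_self, inner_zero_left]
      rw [expandW u' v' w' a b] at h0
      rw [hAA, hBB, hCC, huv, hvw, huw]
      linarith
    have := inner_self_eq_zero.mp hz
    rwa [sub_eq_zero] at this
  refine ⟨c1, c2, ?_, ?_⟩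
  · -- the affine subspace
    refine ⟨AffineSubspace.mk' P0 (Submodule.span ℝ (Set.range ![u, v])), ?_, ?_, ?_, ?_, ?_⟩
    · rw [AffineSubspace.direction_mk', finrank_span_eq_card hindH, Fintype.card_fin]
    · rw [AffineSubspace.mem_mk', vsub_eq_sub, ← hu]
      exact Submodule.subset_span ⟨0, rfl⟩
    · exact AffineSubspace.self_mem_mk' _ _
    · rw [AffineSubspace.mem_mk', vsub_eq_sub, ← hv]
      exact Submodule.subset_span ⟨1, rfl⟩
    · rw [AffineSubspace.mem_mk', vsub_eq_sub]
      have e : Qplus - P0 = a • u + (b + 1) • v := by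
        have e' : Qplus - P0 = w + v := by rw [hw, hv]; abel
        rw [e', hwab, add_smul, one_smul]; abel
      rw [e]
      exact Submodule.add_mem _
        (Submodule.smul_mem _ _ (Submodule.subset_span ⟨0, rfl⟩))
        (Submodule.smul_mem _ _ (Submodule.subset_span ⟨1, rfl⟩))
  · -- the separating affine functional
    have hPm : Pminus = P0 + u := by rw [hu]; abel
    have hQ0' : Q0 = P0 + v := by rw [hv]; abel
    have hQp : Qplus = P0 + (a • u + (b + 1) • v) := by
      have e' : Qplus = P0 + (w + v) := by rw [hw, hv]; abel
      rw [e', hwab, add_smul, one_smul]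
      congr 1
      abel
    obtain ⟨g, hg0, hgq, hgm, hgp⟩ := sep_functional P0 u v a b hD ha_neg
    refine ⟨g, hg0, ?_, ?_, ?_⟩
    · rw [hQ0']; exact hgq
    · rw [hPm]; exact hgm
    · rw [hQp]; exact hgp
end

section
/- Let p̃, q̃, x̃ be affinely independent points of the Euclidean plane ℝ². Let p̃₀, p̃₊ lie on the segment [p̃, x̃] so that p̃, p̃₀, p̃₊, x̃ appear in this order and are pairwise distinct, and let q̃₀, q̃₊ lie on the segment [q̃, x̃] so that q̃, q̃₀, q̃₊, x̃ appear in this order and are pairwise distinct. Let H be a real Hilbert space and let p̂₋, p̂₀, p̂₊, x̂_p, q̂₋, q̂₀, q̂₊, x̂_q ∈ H; write the model point of p̂₋, p̂₀, p̂₊, x̂_p as p̃, p̃₀, p̃₊, x̃ respectively and of q̂₋, q̂₀, q̂₊, x̂_q as q̃, q̃₀, q̃₊, x̃ respectively. Assume: ‖p̂₀ − q̂₀‖ = ‖p̃₀ − q̃₀‖; ‖p̂₀ − û‖ equals the distance between the model points of p̂₀ and û for each û ∈ {p̂₋, p̂₊, x̂_p}; ‖q̂₀ − v̂‖ equals the distance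 between the model points of q̂₀ and v̂ for each v̂ ∈ {q̂₋, q̂₊, x̂_q}; and ‖û − v̂‖ is at least the distance between the corresponding model points for every pair û, v̂ among the eight points. Then ‖û − v̂‖ equals the distance between the corresponding model points for every pair; in particular x̂_p = x̂_q. -/
open scoped InnerProductSpace

lemma seg_vec_ratio {E : Type*} [NormedAddCommGroup E] [NormedSpace ℝ E]
    {x y z : E} (h : y ∈ segment ℝ x z) (hxy : x ≠ y) :
    z - y = (dist y z / dist x y) • (y - x) := by
  obtain ⟨s, t, hs, ht, hst, hyz⟩ := h
  have hyx : y - x = t • (z - x) := by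
    rw [← hyz]
    have hs' : s = 1 - t := by linarith
    rw [hs']; module
  have hzy : z - y = s • (z - x) := by
    rw [← hyz]
    have ht' : t = 1 - s := by linarith
    rw [ht']; module
  have hdxy : dist x y = t * ‖z - x‖ := by
    rw [dist_eq_norm', hyx, norm_smul, Real.norm_eq_abs, abs_of_nonneg ht]
  have hdyz : dist y z = s * ‖z - x‖ := by
    rw [dist_eq_norm', hzy, norm_smul, Real.norm_eq_abs, abs_of_nonneg hs]
  have hpos : 0 < t * ‖z - x‖ := by
    rw [← hdxy]; exact dist_pos.mpr hxy
  have htne : t ≠ 0 := by rintro rfl; simp at hpos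
  have hnne : ‖z - x‖ ≠ 0 := by
    intro h0; rw [h0, mul_zero] at hpos; exact lt_irrefl _ hpos
  rw [hdxy, hdyz, hzy, hyx, smul_smul]
  congr 1
  field_simp

lemma norm_comb_sq {F : Type*} [NormedAddCommGroup F] [InnerProductSpace ℝ F]
    (W U V : F) (α β γ : ℝ) :
    ‖α • W + β • U + γ • V‖ ^ 2 =
      α^2 * ‖W‖^2 + β^2 * ‖U‖^2 + γ^2 * ‖V‖^2
      + 2*α*β * ⟪W, U⟫_ℝ + 2*α*γ * ⟪W, V⟫_ℝ + 2*β*γ * ⟪U, V⟫_ℝ := by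
  rw [← real_inner_self_eq_norm_sq]
  simp only [inner_add_left, inner_add_right, real_inner_smul_left, real_inner_smul_right,
    real_inner_self_eq_norm_sq, norm_smul, Real.norm_eq_abs, mul_pow, sq_abs]
  rw [real_inner_comm U W, real_inner_comm V W, real_inner_comm V U]
  ring


lemma eq_of_sq_eq_of_nonneg {a b : ℝ} (h : a ^ 2 = b ^ 2) (ha : 0 ≤ a) (hb : 0 ≤ b) :
    a = b := by nlinarith

set_option maxHeartbeats 2000000 in
/-- The configuration rigidity in the key lemma: `pt, qt, xt` are affinely independent
points of the Euclidean plane, `pt0, ptplus` lie on `[pt, xt]` in the order `pt, pt0, ptplus, xt`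
(pairwise distinct) and `qt0, qtplus` lie on `[qt, xt]` in the order `qt, qt0, qtplus, xt`
(pairwise distinct).  The eight points `A 0, …, A 7 = Pminus, P0, Pplus, x̂_p, Qminus, Q0, Qplus, Xq`
of a real Hilbert space `H` have model points `m 0, …, m 7 = pt, pt0, ptplus, xt, qt, qt0, qtplus, xt`.
If `‖P0 - Q0‖`, the distances from `P0` to `Pminus, Pplus, x̂_p` and the distances from
`Q0` to `Qminus, Qplus, Xq` equal the corresponding model distances, and every pairwise
distance among the eight points is at least the corresponding model distance, then every
pairwise distance equals the model one; in particular `x̂_p = Xq`. -/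
theorem key_configuration_rigidity
    {H : Type*} [NormedAddCommGroup H] [InnerProductSpace ℝ H] [CompleteSpace H]
    (pt qt xt pt0 ptplus qt0 qtplus : EuclideanSpace ℝ (Fin 2))
    (hindep : AffineIndependent ℝ ![pt, qt, xt])
    (hp0 : pt0 ∈ segment ℝ pt ptplus) (hpplus : ptplus ∈ segment ℝ pt0 xt)
    (hpdist : [pt, pt0, ptplus, xt].Pairwise (· ≠ ·))
    (hq0 : qt0 ∈ segment ℝ qt qtplus) (hqplus : qtplus ∈ segment ℝ qt0 xt)
    (hqdist : [qt, qt0, qtplus, xt].Pairwise (· ≠ ·))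
    (Pminus P0 Pplus Xp Qminus Q0 Qplus Xq : H)
    (A : Fin 8 → H) (hA : A = ![Pminus, P0, Pplus, Xp, Qminus, Q0, Qplus, Xq])
    (m : Fin 8 → EuclideanSpace ℝ (Fin 2))
    (hm : m = ![pt, pt0, ptplus, xt, qt, qt0, qtplus, xt])
    (hcenter : ‖P0 - Q0‖ = dist pt0 qt0)
    (hP1 : ‖P0 - Pminus‖ = dist pt0 pt) (hP2 : ‖P0 - Pplus‖ = dist pt0 ptplus)
    (hP3 : ‖P0 - Xp‖ = dist pt0 xt)
    (hQ1 : ‖Q0 - Qminus‖ = dist qt0 qt) (hQ2 : ‖Q0 - Qplus‖ = dist qt0 qtplus)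
    (hQ3 : ‖Q0 - Xq‖ = dist qt0 xt)
    (hge : ∀ i j : Fin 8, dist (m i) (m j) ≤ ‖A i - A j‖) :
    (∀ i j : Fin 8, ‖A i - A j‖ = dist (m i) (m j)) ∧ Xp = Xq := by
  simp only [List.pairwise_cons, List.mem_cons, List.mem_singleton, List.not_mem_nil,
    forall_eq_or_imp, forall_eq] at hpdist hqdist
  obtain ⟨⟨p1, p2, p3, -⟩, ⟨p4, p5, -⟩, ⟨p6, -⟩, -⟩ := hpdist
  obtain ⟨⟨q1, q2, q3, -⟩, ⟨q4, q5, -⟩, ⟨q6, -⟩, -⟩ := hqdist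
  have ha1 : 0 < dist pt pt0 := dist_pos.2 p1
  have hb1 : 0 < dist pt0 ptplus := dist_pos.2 p4
  have hc1 : 0 < dist ptplus xt := dist_pos.2 p6
  have ha2 : 0 < dist qt qt0 := dist_pos.2 q1
  have hb2 : 0 < dist qt0 qtplus := dist_pos.2 q4
  have hc2 : 0 < dist qtplus xt := dist_pos.2 q6
  -- model distance sums
  have hdpp : dist pt ptplus = dist pt pt0 + dist pt0 ptplus :=
    (dist_add_dist_of_mem_segment hp0).symm
  have hdpx0 : dist pt0 xt = dist pt0 ptplus + dist ptplus xt :=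
    (dist_add_dist_of_mem_segment hpplus).symm
  have hdqq : dist qt qtplus = dist qt qt0 + dist qt0 qtplus :=
    (dist_add_dist_of_mem_segment hq0).symm
  have hdqx0 : dist qt0 xt = dist qt0 qtplus + dist qtplus xt :=
    (dist_add_dist_of_mem_segment hqplus).symm
  -- model vector relations
  have hmpu : ptplus - pt0 = (dist pt0 ptplus / dist pt pt0) • (pt0 - pt) :=
    seg_vec_ratio hp0 p1
  have hmxp : xt - ptplus = (dist ptplus xt / dist pt0 ptplus) • (ptplus - pt0) :=
    seg_vec_ratio hpplus p4
  have hmxu : xt - pt0 = (dist pt0 xt / dist pt pt0) • (pt0 - pt) := by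
    have e : xt - pt0 = (xt - ptplus) + (ptplus - pt0) := by abel
    rw [e, hmxp, hmpu, smul_smul, ← add_smul, hdpx0]
    congr 1
    field_simp
    ring
  have hmqv : qtplus - qt0 = (dist qt0 qtplus / dist qt qt0) • (qt0 - qt) :=
    seg_vec_ratio hq0 q1
  have hmxq : xt - qtplus = (dist qtplus xt / dist qt0 qtplus) • (qtplus - qt0) :=
    seg_vec_ratio hqplus q4
  have hmxv : xt - qt0 = (dist qt0 xt / dist qt qt0) • (qt0 - qt) := by
    have e : xt - qt0 = (xt - qtplus) + (qtplus - qt0) := by abel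
    rw [e, hmxq, hmqv, smul_smul, ← add_smul, hdqx0]
    congr 1
    field_simp
    ring
  -- dist pt xt and dist qt xt
  have hdpx : dist pt xt = dist pt pt0 + dist pt0 xt := by
    have e2 : xt - pt = (xt - pt0) + (pt0 - pt) := by abel
    have e3 : ((dist pt pt0 + dist pt0 xt) / dist pt pt0)
        = dist pt0 xt / dist pt pt0 + 1 := by field_simp; ring
    have e : xt - pt = ((dist pt pt0 + dist pt0 xt) / dist pt pt0) • (pt0 - pt) := by
      rw [e2, hmxu, e3, add_smul, one_smul]
    rw [dist_eq_norm', e, norm_smul, Real.norm_eq_abs,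
      abs_of_nonneg (by positivity), ← dist_eq_norm']
    field_simp
  have hdqx : dist qt xt = dist qt qt0 + dist qt0 xt := by
    have e2 : xt - qt = (xt - qt0) + (qt0 - qt) := by abel
    have e3 : ((dist qt qt0 + dist qt0 xt) / dist qt qt0)
        = dist qt0 xt / dist qt qt0 + 1 := by field_simp; ring
    have e : xt - qt = ((dist qt qt0 + dist qt0 xt) / dist qt qt0) • (qt0 - qt) := by
      rw [e2, hmxv, e3, add_smul, one_smul]
    rw [dist_eq_norm', e, norm_smul, Real.norm_eq_abs,
      abs_of_nonneg (by positivity), ← dist_eq_norm']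
    field_simp
  -- norm equalities for the three basic vectors
  have nW : ‖P0 - Q0‖ = ‖pt0 - qt0‖ := by rw [hcenter, dist_eq_norm]
  have nU : ‖P0 - Pminus‖ = ‖pt0 - pt‖ := by rw [hP1, dist_eq_norm]
  have nV : ‖Q0 - Qminus‖ = ‖qt0 - qt‖ := by rw [hQ1, dist_eq_norm]
  have hnePm : Pminus ≠ P0 := by
    intro h0
    have hpos : (0:ℝ) < ‖P0 - Pminus‖ := by rw [hP1, dist_comm]; exact ha1
    rw [h0, sub_self, norm_zero] at hpos
    exact lt_irrefl _ hpos
  have hneQm : Qminus ≠ Q0 := by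
    intro h0
    have hpos : (0:ℝ) < ‖Q0 - Qminus‖ := by rw [hQ1, dist_comm]; exact ha2
    rw [h0, sub_self, norm_zero] at hpos
    exact lt_irrefl _ hpos
  have hge02 : dist pt ptplus ≤ ‖Pminus - Pplus‖ := by
    have h := hge 0 2; rw [hA, hm] at h; exact h
  have hge03 : dist pt xt ≤ ‖Pminus - Xp‖ := by
    have h := hge 0 3; rw [hA, hm] at h; exact h
  have hge46 : dist qt qtplus ≤ ‖Qminus - Qplus‖ := by
    have h := hge 4 6; rw [hA, hm] at h; exact h
  have hge47 : dist qt xt ≤ ‖Qminus - Xq‖ := by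
    have h := hge 4 7; rw [hA, hm] at h; exact h
  -- H-side rigidity along the P-line
  have hPU : Pplus - P0 = (dist pt0 ptplus / dist pt pt0) • (P0 - Pminus) := by
    have heq : dist Pminus P0 + dist P0 Pplus = dist Pminus Pplus := by
      have hub : dist Pminus Pplus ≤ dist pt pt0 + dist pt0 ptplus := by
        calc dist Pminus Pplus ≤ dist Pminus P0 + dist P0 Pplus := dist_triangle _ _ _
          _ = dist pt pt0 + dist pt0 ptplus := by
              rw [dist_comm Pminus P0, dist_eq_norm, dist_eq_norm, hP1, hP2, dist_comm pt0 pt]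
      have hlb : dist pt pt0 + dist pt0 ptplus ≤ dist Pminus Pplus := by
        rw [← hdpp]; exact hge02.trans_eq (dist_eq_norm Pminus Pplus).symm
      have hd : dist Pminus Pplus = dist pt pt0 + dist pt0 ptplus := le_antisymm hub hlb
      rw [hd, dist_comm Pminus P0, dist_eq_norm, dist_eq_norm, hP1, hP2, dist_comm pt0 pt]
    have hseg : P0 ∈ segment ℝ Pminus Pplus :=
      mem_segment_iff_wbtw.mpr (dist_add_dist_eq_iff.mp heq)
    have h := seg_vec_ratio hseg hnePm
    rwa [dist_comm Pminus P0, dist_eq_norm, dist_eq_norm, hP1, hP2, dist_comm pt0 pt] at h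
  have hXU : Xp - P0 = (dist pt0 xt / dist pt pt0) • (P0 - Pminus) := by
    have heq : dist Pminus P0 + dist P0 Xp = dist Pminus Xp := by
      have hub : dist Pminus Xp ≤ dist pt pt0 + dist pt0 xt := by
        calc dist Pminus Xp ≤ dist Pminus P0 + dist P0 Xp := dist_triangle _ _ _
          _ = dist pt pt0 + dist pt0 xt := by
              rw [dist_comm Pminus P0, dist_eq_norm, dist_eq_norm, hP1, hP3, dist_comm pt0 pt]
      have hlb : dist pt pt0 + dist pt0 xt ≤ dist Pminus Xp := by
        rw [← hdpx]; exact hge03.trans_eq (dist_eq_norm Pminus Xp).symm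
      have hd : dist Pminus Xp = dist pt pt0 + dist pt0 xt := le_antisymm hub hlb
      rw [hd, dist_comm Pminus P0, dist_eq_norm, dist_eq_norm, hP1, hP3, dist_comm pt0 pt]
    have hseg : P0 ∈ segment ℝ Pminus Xp :=
      mem_segment_iff_wbtw.mpr (dist_add_dist_eq_iff.mp heq)
    have h := seg_vec_ratio hseg hnePm
    rwa [dist_comm Pminus P0, dist_eq_norm, dist_eq_norm, hP1, hP3, dist_comm pt0 pt] at h
  have hQV : Qplus - Q0 = (dist qt0 qtplus / dist qt qt0) • (Q0 - Qminus) := by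
    have heq : dist Qminus Q0 + dist Q0 Qplus = dist Qminus Qplus := by
      have hub : dist Qminus Qplus ≤ dist qt qt0 + dist qt0 qtplus := by
        calc dist Qminus Qplus ≤ dist Qminus Q0 + dist Q0 Qplus := dist_triangle _ _ _
          _ = dist qt qt0 + dist qt0 qtplus := by
              rw [dist_comm Qminus Q0, dist_eq_norm, dist_eq_norm, hQ1, hQ2, dist_comm qt0 qt]
      have hlb : dist qt qt0 + dist qt0 qtplus ≤ dist Qminus Qplus := by
        rw [← hdqq]; exact hge46.trans_eq (dist_eq_norm Qminus Qplus).symm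
      have hd : dist Qminus Qplus = dist qt qt0 + dist qt0 qtplus := le_antisymm hub hlb
      rw [hd, dist_comm Qminus Q0, dist_eq_norm, dist_eq_norm, hQ1, hQ2, dist_comm qt0 qt]
    have hseg : Q0 ∈ segment ℝ Qminus Qplus :=
      mem_segment_iff_wbtw.mpr (dist_add_dist_eq_iff.mp heq)
    have h := seg_vec_ratio hseg hneQm
    rwa [dist_comm Qminus Q0, dist_eq_norm, dist_eq_norm, hQ1, hQ2, dist_comm qt0 qt] at h
  have hXV : Xq - Q0 = (dist qt0 xt / dist qt qt0) • (Q0 - Qminus) := by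
    have heq : dist Qminus Q0 + dist Q0 Xq = dist Qminus Xq := by
      have hub : dist Qminus Xq ≤ dist qt qt0 + dist qt0 xt := by
        calc dist Qminus Xq ≤ dist Qminus Q0 + dist Q0 Xq := dist_triangle _ _ _
          _ = dist qt qt0 + dist qt0 xt := by
              rw [dist_comm Qminus Q0, dist_eq_norm, dist_eq_norm, hQ1, hQ3, dist_comm qt0 qt]
      have hlb : dist qt qt0 + dist qt0 xt ≤ dist Qminus Xq := by
        rw [← hdqx]; exact hge47.trans_eq (dist_eq_norm Qminus Xq).symm
      have hd : dist Qminus Xq = dist qt qt0 + dist qt0 xt := le_antisymm hub hlb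
      rw [hd, dist_comm Qminus Q0, dist_eq_norm, dist_eq_norm, hQ1, hQ3, dist_comm qt0 qt]
    have hseg : Q0 ∈ segment ℝ Qminus Xq :=
      mem_segment_iff_wbtw.mpr (dist_add_dist_eq_iff.mp heq)
    have h := seg_vec_ratio hseg hneQm
    rwa [dist_comm Qminus Q0, dist_eq_norm, dist_eq_norm, hQ1, hQ3, dist_comm qt0 qt] at h
  -- the six cross inequalities
  have hb1a1 : 0 < dist pt0 ptplus / dist pt pt0 := div_pos hb1 ha1
  have hb2a2 : 0 < dist qt0 qtplus / dist qt qt0 := div_pos hb2 ha2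
  have sqle : ∀ α β γ : ℝ, ∀ X Y : H, ∀ x y : EuclideanSpace ℝ (Fin 2),
      X - Y = α • (P0 - Q0) + β • (P0 - Pminus) + γ • (Q0 - Qminus) →
      x - y = α • (pt0 - qt0) + β • (pt0 - pt) + γ • (qt0 - qt) →
      dist x y ≤ ‖X - Y‖ →
      2*α*β * ⟪pt0 - qt0, pt0 - pt⟫_ℝ + 2*α*γ * ⟪pt0 - qt0, qt0 - qt⟫_ℝ
        + 2*β*γ * ⟪pt0 - pt, qt0 - qt⟫_ℝ
      ≤ 2*α*β * ⟪P0 - Q0, P0 - Pminus⟫_ℝ + 2*α*γ * ⟪P0 - Q0, Q0 - Qminus⟫_ℝ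
        + 2*β*γ * ⟪P0 - Pminus, Q0 - Qminus⟫_ℝ := by
    intro α β γ X Y x y hXY hxy hle
    rw [dist_eq_norm, hxy, hXY] at hle
    have hsq := pow_le_pow_left₀ (norm_nonneg _) hle 2
    rw [norm_comb_sq, norm_comb_sq, nW, nU, nV] at hsq
    linarith
  have g25 : dist ptplus qt0 ≤ ‖Pplus - Q0‖ := by
    have h := hge 2 5; rw [hA, hm] at h; exact h
  have g05 : dist pt qt0 ≤ ‖Pminus - Q0‖ := by
    have h := hge 0 5; rw [hA, hm] at h; exact h
  have g14 : dist pt0 qt ≤ ‖P0 - Qminus‖ := by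
    have h := hge 1 4; rw [hA, hm] at h; exact h
  have g16 : dist pt0 qtplus ≤ ‖P0 - Qplus‖ := by
    have h := hge 1 6; rw [hA, hm] at h; exact h
  have g06 : dist pt qtplus ≤ ‖Pminus - Qplus‖ := by
    have h := hge 0 6; rw [hA, hm] at h; exact h
  have g26 : dist ptplus qtplus ≤ ‖Pplus - Qplus‖ := by
    have h := hge 2 6; rw [hA, hm] at h; exact h
  have w25 := sqle 1 (dist pt0 ptplus / dist pt pt0) 0 Pplus Q0 ptplus qt0
    (by linear_combination (norm := module) hPU)
    (by linear_combination (norm := module) hmpu) g25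
  have w05 := sqle 1 (-1) 0 Pminus Q0 pt qt0 (by module) (by module) g05
  have w14 := sqle 1 0 1 P0 Qminus pt0 qt (by module) (by module) g14
  have w16 := sqle 1 0 (-(dist qt0 qtplus / dist qt qt0)) P0 Qplus pt0 qtplus
    (by linear_combination (norm := module) (-1 : ℝ) • hQV)
    (by linear_combination (norm := module) (-1 : ℝ) • hmqv) g16
  have w06 := sqle 1 (-1) (-(dist qt0 qtplus / dist qt qt0)) Pminus Qplus pt qtplus
    (by linear_combination (norm := module) (-1 : ℝ) • hQV)
    (by linear_combination (norm := module) (-1 : ℝ) • hmqv) g06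
  have w26 := sqle 1 (dist pt0 ptplus / dist pt pt0) (-(dist qt0 qtplus / dist qt qt0))
    Pplus Qplus ptplus qtplus
    (by linear_combination (norm := module) hPU - hQV)
    (by linear_combination (norm := module) hmpu - hmqv) g26
  have eWU : ⟪P0 - Q0, P0 - Pminus⟫_ℝ = ⟪pt0 - qt0, pt0 - pt⟫_ℝ := by
    apply le_antisymm
    · linarith [w05]
    · nlinarith [w25, hb1a1]
  have eWV : ⟪P0 - Q0, Q0 - Qminus⟫_ℝ = ⟪pt0 - qt0, qt0 - qt⟫_ℝ := by
    apply le_antisymm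
    · nlinarith [w16, hb2a2]
    · linarith [w14]
  rw [eWU, eWV] at w06 w26
  have eUV : ⟪P0 - Pminus, Q0 - Qminus⟫_ℝ = ⟪pt0 - pt, qt0 - qt⟫_ℝ := by
    apply le_antisymm
    · nlinarith [w26, mul_pos hb1a1 hb2a2]
    · nlinarith [w06, hb2a2]
  have keynorm : ∀ α β γ : ℝ,
      ‖α • (P0 - Q0) + β • (P0 - Pminus) + γ • (Q0 - Qminus)‖
        = ‖α • (pt0 - qt0) + β • (pt0 - pt) + γ • (qt0 - qt)‖ := by
    intro α β γ
    have hsq : ‖α • (P0 - Q0) + β • (P0 - Pminus) + γ • (Q0 - Qminus)‖^2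
        = ‖α • (pt0 - qt0) + β • (pt0 - pt) + γ • (qt0 - qt)‖^2 := by
      rw [norm_comb_sq, norm_comb_sq, nW, nU, nV, eWU, eWV, eUV]
    exact eq_of_sq_eq_of_nonneg hsq (norm_nonneg _) (norm_nonneg _)
  -- representation of all eight points
  have hrep : ∀ i : Fin 8, ∃ α β γ : ℝ,
      A i = Q0 + α • (P0 - Q0) + β • (P0 - Pminus) + γ • (Q0 - Qminus) ∧
      m i = qt0 + α • (pt0 - qt0) + β • (pt0 - pt) + γ • (qt0 - qt) := by
    intro i
    fin_cases i
    · exact ⟨1, -1, 0, by rw [hA]; show Pminus = _; module,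
        by rw [hm]; show pt = _; module⟩
    · exact ⟨1, 0, 0, by rw [hA]; show P0 = _; module,
        by rw [hm]; show pt0 = _; module⟩
    · exact ⟨1, dist pt0 ptplus / dist pt pt0, 0,
        by rw [hA]; show Pplus = _; linear_combination (norm := module) hPU,
        by rw [hm]; show ptplus = _; linear_combination (norm := module) hmpu⟩
    · exact ⟨1, dist pt0 xt / dist pt pt0, 0,
        by rw [hA]; show Xp = _; linear_combination (norm := module) hXU,
        by rw [hm]; show xt = _; linear_combination (norm := module) hmxu⟩
    · exact ⟨0, 0, -1, by rw [hA]; show Qminus = _; module,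
        by rw [hm]; show qt = _; module⟩
    · exact ⟨0, 0, 0, by rw [hA]; show Q0 = _; module,
        by rw [hm]; show qt0 = _; module⟩
    · exact ⟨0, 0, dist qt0 qtplus / dist qt qt0,
        by rw [hA]; show Qplus = _; linear_combination (norm := module) hQV,
        by rw [hm]; show qtplus = _; linear_combination (norm := module) hmqv⟩
    · exact ⟨0, 0, dist qt0 xt / dist qt qt0,
        by rw [hA]; show Xq = _; linear_combination (norm := module) hXV,
        by rw [hm]; show xt = _; linear_combination (norm := module) hmxv⟩
  have main : ∀ i j : Fin 8, ‖A i - A j‖ = dist (m i) (m j) := by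
    intro i j
    obtain ⟨α, β, γ, hA1, hm1⟩ := hrep i
    obtain ⟨α', β', γ', hA2, hm2⟩ := hrep j
    have e1 : A i - A j = (α - α') • (P0 - Q0) + (β - β') • (P0 - Pminus)
        + (γ - γ') • (Q0 - Qminus) := by rw [hA1, hA2]; module
    have e2 : m i - m j = (α - α') • (pt0 - qt0) + (β - β') • (pt0 - pt)
        + (γ - γ') • (qt0 - qt) := by rw [hm1, hm2]; module
    rw [e1, dist_eq_norm, e2, keynorm]
  refine ⟨main, ?_⟩
  have h37 := main 3 7
  rw [hA, hm] at h37
  have h37' : ‖Xp - Xq‖ = dist xt xt := h37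
  rw [dist_self] at h37'
  exact sub_eq_zero.mp (norm_eq_zero.mp h37')
end
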